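/- Let q₀(z,t) = z̄² (t² + |z|⁴)^{2/3} / ( |z|^{8/3} (t + i|z|²)² ) on ℍ minus the t-axis, and let γ_{x,α}(s) = ( √(e^x sin s) α e^{is/2}, e^x cos s ) for s ∈ (0,π), x ∈ ℝ, |α| = 1. Then q₀(γ_{x,α}(s)) · (γ'_{x,α,1}(s))² = 1 / (4 sin^{4/3} s) for all s ∈ (0,π), where γ_{x,α,1} is the ℂ-component. In particular each γ_{x,α} is a horizontal trajectory of q₀ and its q₀-length equals C = (1/2) ∫₀^π sin^{−2/3}(s) ds, independent of (x, α). -/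

import Mathlib

open Set Complex MeasureTheory

/-- The quadratic differential `q₀(z,t) = z̄²(t²+|z|⁴)^{2/3}/(|z|^{8/3}(t+i|z|²)²)`
on `ℍ` minus the `t`-axis. -/
noncomputable def q0 (p : ℂ × ℝ) : ℂ :=
  (starRingEnd ℂ) p.1 ^ 2 * (((p.2 ^ 2 + ‖p.1‖ ^ 4) ^ (2/3 : ℝ) : ℝ) : ℂ) /
    (((‖p.1‖ ^ (8/3 : ℝ) : ℝ) : ℂ) *
      ((p.2 : ℂ) + Complex.I * ((‖p.1‖ ^ 2 : ℝ) : ℂ)) ^ 2)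

/-- The ℂ-component of the spherical arc `γ_{x,α}(s) = (√(eˣ sin s)·α e^{is/2}, eˣ cos s)`. -/
noncomputable def sphArc1 (x : ℝ) (α : ℂ) (s : ℝ) : ℂ :=
  (Real.sqrt (Real.exp x * Real.sin s) : ℂ) * α * Complex.exp (Complex.I * s / 2)

/-- The ℝ-component of the spherical arc `γ_{x,α}`. -/
noncomputable def sphArc2 (x : ℝ) (s : ℝ) : ℝ :=
  Real.exp x * Real.cos s

lemma key (x : ℝ) (α : ℂ) (hα : ‖α‖ = 1) {s : ℝ} (hs : s ∈ Set.Ioo 0 Real.pi) :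
    q0 (sphArc1 x α s, sphArc2 x s) * (deriv (sphArc1 x α) s) ^ 2
      = (((1 / (4 * Real.sin s ^ (4/3 : ℝ)) : ℝ)) : ℂ) := by
  have hr : (0:ℝ) < Real.exp x := Real.exp_pos x
  have hσ : 0 < Real.sin s := Real.sin_pos_of_pos_of_lt_pi hs.1 hs.2
  set r := Real.exp x with hr_def
  set σ := Real.sin s with hσ_def
  set c := Real.cos s with hc_def
  have hrσ : 0 < r * σ := mul_pos hr hσ
  set t := Real.sqrt (r * σ) with ht_def
  have ht : 0 < t := Real.sqrt_pos.mpr hrσ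
  have ht2 : t ^ 2 = r * σ := Real.sq_sqrt hrσ.le
  have ht2C : ((t:ℂ))^2 = (r:ℂ) * (σ:ℂ) := by exact_mod_cast congrArg (Complex.ofReal) ht2
  set E := Complex.exp (Complex.I * (s:ℂ) / 2) with hE_def
  have hEne : E ≠ 0 := Complex.exp_ne_zero _
  have hαne : α ≠ 0 := by
    intro h; rw [h] at hα; simp at hα
  -- derivative
  have h1 : HasDerivAt (fun s => r * Real.sin s) (r * c) s := (Real.hasDerivAt_sin s).const_mul r
  have h2 : HasDerivAt (fun s => Real.sqrt (r * Real.sin s)) (r * c / (2 * t)) s :=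
    h1.sqrt hrσ.ne'
  have h3 : HasDerivAt (fun s : ℝ => ((Real.sqrt (r * Real.sin s) : ℝ) : ℂ))
      (((r * c / (2 * t) : ℝ) : ℂ)) s := h2.ofReal_comp
  have h4 : HasDerivAt (fun s : ℝ => Complex.exp (Complex.I * (s:ℂ) / 2))
      (Complex.exp (Complex.I * (s:ℂ) / 2) * (Complex.I / 2)) s := by
    have hid : HasDerivAt (fun s : ℝ => ((s:ℝ) : ℂ)) 1 s := Complex.ofRealCLM.hasDerivAt
    have := ((hid.const_mul Complex.I).div_const 2).cexp
    simpa using this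
  have h5 : HasDerivAt (sphArc1 x α)
      (((r * c / (2 * t) : ℝ) : ℂ) * α * E + ((t:ℝ):ℂ) * α * (E * (Complex.I / 2))) s := by
    have h := (h3.mul_const α).mul h4
    have heq : (sphArc1 x α) = fun u : ℝ =>
        ((Real.sqrt (r * Real.sin u) : ℝ) : ℂ) * α * Complex.exp (Complex.I * (u:ℂ) / 2) := by
      funext u; simp [sphArc1, hr_def]
    rw [heq]
    exact h
  have hF : ((c:ℂ) + (σ:ℂ) * Complex.I) ≠ 0 := by
    intro h
    have := congrArg Complex.im h
    simp at this
    exact hσ.ne' this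
  have hD : deriv (sphArc1 x α) s
      = α * E * ((r:ℂ) * ((c:ℂ) + (σ:ℂ) * Complex.I)) / (2 * (t:ℂ)) := by
    rw [h5.deriv]
    have htC : ((t:ℝ):ℂ) ≠ 0 := by exact_mod_cast ht.ne'
    push_cast
    field_simp
    linear_combination (Complex.I) * ht2C
  have hD2 : (deriv (sphArc1 x α) s) ^ 2
      = α^2 * E^2 * (r:ℂ) * ((c:ℂ) + (σ:ℂ) * Complex.I)^2 / (4 * (σ:ℂ)) := by
    rw [hD]
    have htC : ((t:ℝ):ℂ) ≠ 0 := by exact_mod_cast ht.ne'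
    have hσC : ((σ:ℝ):ℂ) ≠ 0 := by exact_mod_cast hσ.ne'
    field_simp
    linear_combination (-4*(r:ℂ)) * ht2C
  -- components of q0
  have hz : sphArc1 x α s = ((t:ℝ):ℂ) * α * E := by
    simp [sphArc1, ht_def, hr_def, hσ_def, hE_def]
  have habs : ‖sphArc1 x α s‖ = t := by
    have hEabs : ‖E‖ = 1 := by
      rw [hE_def, Complex.norm_exp]; simp
    rw [hz]
    simp [norm_mul, Complex.norm_real, hα, hEabs, _root_.abs_of_nonneg ht.le]
  have hαinv : (starRingEnd ℂ) α = α⁻¹ := by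
    have h1 : α * (starRingEnd ℂ) α = 1 := by
      rw [Complex.mul_conj]
      norm_cast
      rw [Complex.normSq_eq_norm_sq, hα]; norm_num
    exact (inv_eq_of_mul_eq_one_right h1).symm
  have hEinv : (starRingEnd ℂ) E = E⁻¹ := by
    rw [hE_def, ← Complex.exp_conj, ← Complex.exp_neg]
    congr 1
    simp [map_div₀, Complex.conj_I, map_ofNat]
    ring
  have hconj2 : ((starRingEnd ℂ) (sphArc1 x α s))^2 = (r:ℂ) * (σ:ℂ) * (α⁻¹)^2 * (E⁻¹)^2 := by
    rw [hz, map_mul, map_mul, Complex.conj_ofReal, hαinv, hEinv]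
    linear_combination ((α⁻¹) * (E⁻¹))^2 * ht2C
  have hs2 : sphArc2 x s = r * c := rfl
  have hA : ((r*c)^2 + t^4) ^ (2/3 : ℝ) = r ^ (4/3 : ℝ) := by
    have h1 : (r*c)^2 + t^4 = r^2 := by
      have hpy := Real.sin_sq_add_cos_sq s
      have : t^4 = (r*σ)^2 := by rw [← ht2]; ring
      rw [this]
      rw [← hσ_def, ← hc_def] at hpy
      nlinarith [hpy]
    rw [h1, ← Real.rpow_natCast r 2, ← Real.rpow_mul hr.le]
    norm_num
  have hB : t ^ (8/3 : ℝ) = r ^ (4/3:ℝ) * σ ^ (4/3:ℝ) := by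
    rw [ht_def, Real.sqrt_eq_rpow, ← Real.rpow_mul hrσ.le]
    norm_num
    rw [Real.mul_rpow hr.le hσ.le]
  -- main computation
  rw [hD2, q0]
  simp only [hs2, habs, hconj2]
  rw [hA, hB, ht2]
  have hrC : ((r:ℝ):ℂ) ≠ 0 := by exact_mod_cast hr.ne'
  have hσC : ((σ:ℝ):ℂ) ≠ 0 := by exact_mod_cast hσ.ne'
  have hr43 : ((r ^ (4/3:ℝ) : ℝ) : ℂ) ≠ 0 := by
    exact_mod_cast (Real.rpow_pos_of_pos hr _).ne'
  have hσ43 : ((σ ^ (4/3:ℝ) : ℝ) : ℂ) ≠ 0 := by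
    exact_mod_cast (Real.rpow_pos_of_pos hσ _).ne'
  have hFr : ((r*c:ℝ):ℂ) + Complex.I * ((r*σ:ℝ):ℂ) = (r:ℂ) * ((c:ℂ) + (σ:ℂ) * Complex.I) := by
    push_cast; ring
  rw [hFr, div_mul_div_comm]
  have hrhs : (((1 / (4 * σ ^ (4/3:ℝ)) : ℝ)) : ℂ) = 1 / (4 * ((σ ^ (4/3:ℝ) : ℝ) : ℂ)) := by
    push_cast; ring
  rw [hrhs]
  have hden1 : (((r ^ (4/3:ℝ) * σ ^ (4/3:ℝ) : ℝ)) : ℂ) * ((r:ℂ) * ((c:ℂ) + (σ:ℂ) * Complex.I))^2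
      * (4 * (σ:ℂ)) ≠ 0 := by
    push_cast
    exact mul_ne_zero (mul_ne_zero (mul_ne_zero hr43 hσ43)
      (pow_ne_zero _ (mul_ne_zero hrC hF))) (mul_ne_zero (by norm_num) hσC)
  have hden2 : (4 : ℂ) * ((σ ^ (4/3:ℝ) : ℝ) : ℂ) ≠ 0 := mul_ne_zero (by norm_num) hσ43
  rw [div_eq_div_iff hden1 hden2]
  push_cast
  field_simp [hαne, hEne]

lemma key2 (x : ℝ) (α : ℂ) (hα : ‖α‖ = 1) {s : ℝ} (hs : s ∈ Set.Ioo 0 Real.pi) :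
    Real.sqrt (‖q0 (sphArc1 x α s, sphArc2 x s)‖) *
      ‖deriv (sphArc1 x α) s‖
      = 1/2 * Real.sin s ^ (-(2/3) : ℝ) := by
  have hσ : 0 < Real.sin s := Real.sin_pos_of_pos_of_lt_pi hs.1 hs.2
  have h := key x α hα hs
  set A := ‖q0 (sphArc1 x α s, sphArc2 x s)‖ with hA
  set B := ‖deriv (sphArc1 x α) s‖ with hB
  have h43 : (0:ℝ) < Real.sin s ^ (4/3:ℝ) := Real.rpow_pos_of_pos hσ _
  have habs : A * B ^ 2 = 1 / (4 * Real.sin s ^ (4/3:ℝ)) := by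
    have h2 := congrArg norm h
    rwa [norm_mul, norm_pow, Complex.norm_real,
      Real.norm_of_nonneg (div_pos one_pos (by linarith)).le] at h2
  have e1 : (Real.sin s ^ (-(2/3):ℝ)) ^ 2 = Real.sin s ^ (-(4/3):ℝ) := by
    rw [← Real.rpow_natCast (Real.sin s ^ (-(2/3):ℝ)) 2, ← Real.rpow_mul hσ.le]
    norm_num
  have e2 : Real.sin s ^ (-(4/3):ℝ) = (Real.sin s ^ (4/3:ℝ))⁻¹ := Real.rpow_neg hσ.le _
  have hsq : 1 / (4 * Real.sin s ^ (4/3:ℝ)) = (1/2 * Real.sin s ^ (-(2/3):ℝ)) ^ 2 := by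
    rw [mul_pow, e1, e2]; field_simp; norm_num
  calc Real.sqrt A * B = Real.sqrt A * Real.sqrt (B ^ 2) := by
        rw [Real.sqrt_sq (norm_nonneg _)]
    _ = Real.sqrt (A * B ^ 2) := (Real.sqrt_mul (norm_nonneg _) _).symm
    _ = Real.sqrt ((1/2 * Real.sin s ^ (-(2/3):ℝ)) ^ 2) := by rw [habs, hsq]
    _ = 1/2 * Real.sin s ^ (-(2/3):ℝ) :=
        Real.sqrt_sq (mul_nonneg (by norm_num) (Real.rpow_nonneg hσ.le _))

/-- Along the spherical arcs `γ_{x,α}`, one has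
`q₀(γ_{x,α}(s))·(γ'_{x,α,1}(s))² = 1/(4 sin^{4/3} s)`; in particular each `γ_{x,α}` is a
horizontal trajectory of `q₀` and its `q₀`-length is `C = (1/2)∫₀^π sin^{−2/3}(s) ds`,
independently of `(x,α)`. -/
theorem stmt12 (x : ℝ) (α : ℂ) (hα : ‖α‖ = 1) :
    (∀ s ∈ Set.Ioo 0 Real.pi,
      q0 (sphArc1 x α s, sphArc2 x s) * (deriv (sphArc1 x α) s) ^ 2
        = (((1 / (4 * Real.sin s ^ (4/3 : ℝ)) : ℝ)) : ℂ)) ∧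
    (∫ s in Set.Ioo 0 Real.pi,
        Real.sqrt (‖q0 (sphArc1 x α s, sphArc2 x s)‖) *
          ‖deriv (sphArc1 x α) s‖)
      = (1 / 2) * ∫ s in Set.Ioo 0 Real.pi, Real.sin s ^ (-(2/3) : ℝ) := by
  constructor
  · exact fun s hs => key x α hα hs
  · rw [MeasureTheory.setIntegral_congr_fun measurableSet_Ioo (fun s hs => key2 x α hα hs)]
    exact MeasureTheory.integral_const_mul _ _
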